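/- arXiv:2310.14387 — 2 statements merged into one kernel-verified Lean document; each statement's English description precedes it below -/
import Mathlib

section
/- Let A be a self-adjoint trace-free operator on a 3-dimensional real inner product space with det(A) > 0 and largest eigenvalue α. Then (2/3)|A|² ≥ α² > (1/2)|A|². -/
open Matrix

lemma trace_eq_sum_eig {n : Type*} [Fintype n] [DecidableEq n]
    (A : Matrix n n ℝ) (hA : A.IsHermitian) :
    A.trace = ∑ i, hA.eigenvalues i := by
  conv_lhs => rw [hA.spectral_theorem, Unitary.conjStarAlgAut_apply]
  rw [Matrix.trace_mul_cycle,
    (Matrix.mem_unitaryGroup_iff').mp (Matrix.IsHermitian.eigenvectorUnitary hA).2, Matrix.one_mul,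
    Matrix.trace_diagonal]
  simp

lemma trace_sq_eq_sum_eig {n : Type*} [Fintype n] [DecidableEq n]
    (A : Matrix n n ℝ) (hA : A.IsHermitian) :
    (A * A).trace = ∑ i, hA.eigenvalues i ^ 2 := by
  conv_lhs => rw [hA.spectral_theorem, Unitary.conjStarAlgAut_apply]
  rw [show ∀ U D V : Matrix n n ℝ, (U * D * V) * (U * D * V) = U * (D * (V * U) * D) * V from
    fun U D V => by noncomm_ring]
  rw [(Matrix.mem_unitaryGroup_iff').mp (Matrix.IsHermitian.eigenvectorUnitary hA).2]
  rw [Matrix.trace_mul_cycle, ← Matrix.mul_assoc,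
    (Matrix.mem_unitaryGroup_iff').mp (Matrix.IsHermitian.eigenvectorUnitary hA).2, Matrix.one_mul,
    Matrix.mul_one, Matrix.diagonal_mul_diagonal, Matrix.trace_diagonal]
  simp [sq]

/-- For a self-adjoint trace-free operator on a 3-dimensional real inner product space with
`det A > 0` and largest eigenvalue `α`, one has `(2/3)|A|² ≥ α² > (1/2)|A|²`. -/
theorem stmt_3 (A : Matrix (Fin 3) (Fin 3) ℝ) (hA : A.IsHermitian)
    (htr : A.trace = 0) (hdet : 0 < A.det) (α β γ : ℝ)
    (hαβ : β ≤ α) (hβγ : γ ≤ β)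
    (heig : ∃ σ : Equiv.Perm (Fin 3), hA.eigenvalues ∘ σ = ![α, β, γ]) :
    (2 / 3) * Matrix.trace (Aᵀ * A) ≥ α ^ 2 ∧ α ^ 2 > (1 / 2) * Matrix.trace (Aᵀ * A) := by
  obtain ⟨σ, hσ⟩ := heig
  have hAT : Aᵀ = A := by
    have := hA
    rwa [Matrix.IsHermitian, Matrix.conjTranspose_eq_transpose_of_trivial] at this
  have hsum : α + β + γ = 0 := by
    have h1 : ∑ i, hA.eigenvalues i = α + β + γ := by
      rw [← Equiv.sum_comp σ hA.eigenvalues, ← Function.comp_def, hσ]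
      simp [Fin.sum_univ_three]
    rw [trace_eq_sum_eig A hA, h1] at htr
    exact htr
  have hprod : 0 < α * β * γ := by
    have h1 : ∏ i, hA.eigenvalues i = α * β * γ := by
      rw [← Equiv.prod_comp σ hA.eigenvalues, ← Function.comp_def, hσ]
      simp [Fin.prod_univ_three]
    have := hA.det_eq_prod_eigenvalues
    simp only [RCLike.ofReal_real_eq_id, id] at this
    rw [this, h1] at hdet
    exact_mod_cast hdet
  have hS : Matrix.trace (Aᵀ * A) = α ^ 2 + β ^ 2 + γ ^ 2 := by
    rw [hAT, trace_sq_eq_sum_eig A hA, ← Equiv.sum_comp σ (fun i => hA.eigenvalues i ^ 2)]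
    have : (fun i => hA.eigenvalues (σ i) ^ 2) = fun i => (![α, β, γ] i) ^ 2 := by
      funext i
      rw [← Function.comp_apply (f := hA.eigenvalues), hσ]
    rw [show ∑ i, hA.eigenvalues (σ i) ^ 2 = ∑ i, (![α, β, γ] i) ^ 2 from by
      exact Finset.sum_congr rfl fun i _ => congrFun this i]
    simp [Fin.sum_univ_three]
  -- sign analysis: β < 0 and γ < 0
  have hβγ0 : 0 < β * γ := by
    nlinarith [hprod, hsum, hαβ, hβγ, sq_nonneg (β - γ), sq_nonneg (α - β), sq_nonneg (α - γ)]
  constructor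
  · rw [hS]; nlinarith [sq_nonneg (β - γ)]
  · rw [hS]; nlinarith [sq_nonneg (β - γ)]
end

section
/- For a self-adjoint trace-free operator A on a 3-dimensional real inner product space with det(A) > 0, the largest eigenvalue is given by Cardano's formula: α = 2^{2/3} · Re( (det(A) + i·√(|A|⁶/54 − (det A)²))^{1/3} ), where the cube root denotes the principal branch with positive real part. -/
set_option maxHeartbeats 1000000

open Complex in
lemma cardano_core (α β γ d q : ℝ) (hαβ : β ≤ α) (hβγ : γ ≤ β)
    (hsum : α + β + γ = 0) (hprod : α * β * γ = d) (hq : α ^ 2 + β ^ 2 + γ ^ 2 = q)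
    (hd : 0 < d) :
    α = (2 : ℝ) ^ ((2 : ℝ) / 3) *
      (((d : ℂ) + Complex.I * ((Real.sqrt (q ^ 3 / 54 - d ^ 2) : ℝ) : ℂ)) ^ ((1 : ℂ) / 3)).re := by
  have hγ : γ = -(α + β) := by linarith
  subst hγ hprod hq
  set d := α * β * (-(α + β)) with hdd
  set q := α ^ 2 + β ^ 2 + (-(α + β)) ^ 2 with hqq
  -- basic sign facts
  have hα0 : 0 < α := by nlinarith
  have hβ0 : β < 0 := by nlinarith
  have hq0 : 0 < q := by nlinarith
  -- discriminant
  have hdisc : q ^ 3 / 54 - d ^ 2 = ((α - β) * (β - (-(α+β))) * ((-(α+β)) - α)) ^ 2 / 27 := by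
    rw [hdd, hqq]; ring
  have hdisc0 : 0 ≤ q ^ 3 / 54 - d ^ 2 := by rw [hdisc]; positivity
  set s := Real.sqrt (q ^ 3 / 54 - d ^ 2) with hs
  have hs0 : 0 ≤ s := Real.sqrt_nonneg _
  have hs2 : s ^ 2 = q ^ 3 / 54 - d ^ 2 := Real.sq_sqrt hdisc0
  set z : ℂ := (d : ℂ) + Complex.I * (s : ℂ) with hz
  have hzre : z.re = d := by simp [hz]
  have hzim : z.im = s := by simp [hz]
  have hz0 : z ≠ 0 := fun h => by rw [h] at hzre; simp at hzre; linarith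
  have habs : ‖z‖ = Real.sqrt (q ^ 3 / 54) := by
    rw [Complex.norm_def, Complex.normSq_apply, hzre, hzim]
    congr 1; nlinarith
  set u := Real.sqrt (2 * q / 3) with hu
  have hu0 : 0 < u := Real.sqrt_pos.2 (by linarith)
  have hu2 : u ^ 2 = 2 * q / 3 := Real.sq_sqrt (by linarith)
  have habs' : ‖z‖ = u * q / 6 := by
    rw [habs, show q ^ 3 / 54 = (u * q / 6) ^ 2 by linear_combination (-(q^2)/36) * hu2]
    exact Real.sqrt_sq (by positivity)
  have habs0 : 0 < ‖z‖ := by rw [habs']; positivity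
  -- arg bounds
  have harg0 : 0 ≤ z.arg := Complex.arg_nonneg_iff.2 (by rw [hzim]; exact hs0)
  have hargpi : z.arg ≤ Real.pi := Complex.arg_le_pi z
  set c := Real.cos (z.arg / 3) with hc
  have hc0 : 0 < c := Real.cos_pos_of_mem_Ioo ⟨by nlinarith [Real.pi_pos],
    by nlinarith [Real.pi_pos]⟩
  have hcos3 : 4 * c ^ 3 - 3 * c = d / (u * q / 6) := by
    rw [← habs', ← hzre, ← Complex.cos_arg hz0, hc, ← Real.cos_three_mul]
    ring_nf
  have hcos' : u * q / 6 * (4 * c ^ 3 - 3 * c) = d := by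
    rw [hcos3]; field_simp
  set a := u * c with ha
  have haroot : a ^ 3 - q / 2 * a - d = 0 := by
    rw [ha]; linear_combination u * c ^ 3 * hu2 + hcos'
  have hroots : (a - α) * (a - β) * (a - (-(α + β))) = 0 := by
    linear_combination haroot
  have ha0 : 0 < a := mul_pos hu0 hc0
  have haα : a = α := by
    rcases mul_eq_zero.1 hroots with h | h
    · rcases mul_eq_zero.1 h with h | h
      · linarith [sub_eq_zero.1 h]
      · have := sub_eq_zero.1 h; linarith
    · have := sub_eq_zero.1 h; linarith
  -- now compute the RHS
  rw [← haα, ha]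
  have hcpow : (z ^ ((1:ℂ)/3)).re = Real.exp (Real.log (‖z‖) / 3) * c := by
    rw [Complex.cpow_def_of_ne_zero hz0, Complex.exp_re]
    congr 2
    · simp [Complex.log_re, Complex.mul_re, Complex.log_im]; ring
    · simp [hc, Complex.mul_im, Complex.log_re, Complex.log_im]; ring
  rw [hcpow]
  have hexp : (2 : ℝ) ^ ((2:ℝ)/3) * Real.exp (Real.log (‖z‖) / 3) = u := by
    have h1 : Real.exp (Real.log (‖z‖) / 3) = (‖z‖) ^ ((1:ℝ)/3) := by
      rw [Real.rpow_def_of_pos habs0]; ring_nf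
    rw [h1]
    have e1 : ((2:ℝ) ^ ((2:ℝ)/3)) ^ (6:ℕ) = 16 := by
      rw [← Real.rpow_natCast ((2:ℝ) ^ ((2:ℝ)/3)) 6,
        ← Real.rpow_mul (by norm_num : (0:ℝ) ≤ 2),
        show (2:ℝ)/3 * ((6:ℕ):ℝ) = ((4:ℕ):ℝ) by push_cast; norm_num,
        Real.rpow_natCast]
      norm_num
    have e2 : ((‖z‖) ^ ((1:ℝ)/3)) ^ (6:ℕ) = (‖z‖) ^ (2:ℕ) := by
      rw [← Real.rpow_natCast ((‖z‖) ^ ((1:ℝ)/3)) 6,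
        ← Real.rpow_mul habs0.le,
        show (1:ℝ)/3 * ((6:ℕ):ℝ) = ((2:ℕ):ℝ) by push_cast; norm_num,
        Real.rpow_natCast]
    have key : ((2 : ℝ) ^ ((2:ℝ)/3) * (‖z‖) ^ ((1:ℝ)/3)) ^ (6:ℕ) = u ^ (6:ℕ) := by
      rw [mul_pow, e1, e2, habs']
      linear_combination (4*q^2/9 - u^4 - u^2*(2*q/3) - (2*q/3)^2) * hu2
    exact (pow_left_strictMonoOn₀ (by norm_num : (6:ℕ) ≠ 0)).injOn
      (by simp only [Set.mem_setOf_eq]; positivity) (by simp only [Set.mem_setOf_eq]; exact hu0.le) key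
  rw [← mul_assoc, hexp]

open Matrix

/-- Cardano's formula for the top eigenvalue: for a self-adjoint trace-free operator on a
3-dimensional real inner product space with `det A > 0`,
`α = 2^{2/3}·Re((det A + i√(|A|⁶/54 − (det A)²))^{1/3})`, the cube root being the principal
branch. -/
theorem stmt_9 (A : Matrix (Fin 3) (Fin 3) ℝ) (hA : A.IsHermitian)
    (htr : A.trace = 0) (hdet : 0 < A.det) (α β γ : ℝ)
    (hαβ : β ≤ α) (hβγ : γ ≤ β)
    (heig : ∃ σ : Equiv.Perm (Fin 3), hA.eigenvalues ∘ σ = ![α, β, γ]) :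
    α = (2 : ℝ) ^ ((2 : ℝ) / 3) *
      (((A.det : ℂ) + Complex.I *
        ((Real.sqrt ((Matrix.trace (Aᵀ * A)) ^ 3 / 54 - A.det ^ 2) : ℝ) : ℂ)) ^
          ((1 : ℂ) / 3)).re := by
  obtain ⟨σ, hσ⟩ := heig
  have hev : ∀ i, hA.eigenvalues (σ i) = ![α, β, γ] i := fun i => congrFun hσ i
  have hU : star (hA.eigenvectorUnitary : Matrix (Fin 3) (Fin 3) ℝ) *
      (hA.eigenvectorUnitary : Matrix (Fin 3) (Fin 3) ℝ) = 1 :=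
    mem_unitaryGroup_iff'.mp (hA.eigenvectorUnitary).2
  have hAT : Aᵀ = A := hA
  have hspec := hA.spectral_theorem; rw [Unitary.conjStarAlgAut_apply] at hspec
  have htr' : A.trace = ∑ i, hA.eigenvalues i := by
    conv_lhs => rw [hspec]
    rw [Matrix.trace_mul_cycle, hU, Matrix.one_mul, trace_diagonal]
    simp
  have htrsq : Matrix.trace (Aᵀ * A) = ∑ i, (hA.eigenvalues i) ^ 2 := by
    rw [hAT]
    conv_lhs => rw [hspec]
    rw [show ∀ (U D : Matrix (Fin 3) (Fin 3) ℝ), (U * D * star U) * (U * D * star U)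
        = U * (D * (star U * U) * D) * star U from fun U D => by
      simp only [Matrix.mul_assoc], hU]
    rw [Matrix.mul_one, Matrix.trace_mul_cycle, hU, Matrix.one_mul,
      diagonal_mul_diagonal, trace_diagonal]
    simp [sq]
  have hdet' : A.det = ∏ i, hA.eigenvalues i := by simpa using hA.det_eq_prod_eigenvalues
  have hsum : α + β + γ = 0 := by
    rw [← htr]
    rw [htr', ← Equiv.sum_comp σ hA.eigenvalues, Fin.sum_univ_three]
    rw [hev 0, hev 1, hev 2]
    simp
  have hprod : α * β * γ = A.det := by
    rw [hdet', ← Equiv.prod_comp σ hA.eigenvalues, Fin.prod_univ_three]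
    rw [hev 0, hev 1, hev 2]
    simp
  have hq : α ^ 2 + β ^ 2 + γ ^ 2 = Matrix.trace (Aᵀ * A) := by
    rw [htrsq, ← Equiv.sum_comp σ (fun i => (hA.eigenvalues i) ^ 2), Fin.sum_univ_three]
    rw [hev 0, hev 1, hev 2]
    simp
  exact cardano_core α β γ A.det (Matrix.trace (Aᵀ * A)) hαβ hβγ hsum hprod hq hdet
end
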